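/- There exists a countable 3-ladder K′ with an ideal K and a cofinal meet-subsemilattice F of K which is a 2-ladder, such that no cofinal meet-subsemilattice of K′ of breadth at most two contains F. -/

import Mathlib

abbrev V3 := ℕ × ℕ × ℕ

def KP := V3 ⊕ ℕ

namespace KP

/-- `inr m` represents an extra element sitting exactly above `Iic (4m+4, 4m+4, 2m+2)`. -/
def kmem (v : V3) (m : ℕ) : Prop :=
  v.1 ≤ 4*m+4 ∧ v.2.1 ≤ 4*m+4 ∧ v.2.2 ≤ 2*m+2

instance (v : V3) (m : ℕ) : Decidable (kmem v m) := by unfold kmem; infer_instance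

def kle : KP → KP → Prop
  | .inl v, .inl w => v.1 ≤ w.1 ∧ v.2.1 ≤ w.2.1 ∧ v.2.2 ≤ w.2.2
  | .inl v, .inr m => kmem v m
  | .inr _, .inl _ => False
  | .inr m, .inr m' => m ≤ m'

def kproj (m : ℕ) (v : V3) : V3 :=
  (min v.1 (4*m+4), min v.2.1 (4*m+4), min v.2.2 (2*m+2))

def kinf : KP → KP → KP
  | .inl v, .inl w => .inl (min v.1 w.1, min v.2.1 w.2.1, min v.2.2 w.2.2)
  | .inl v, .inr m => .inl (kproj m v)
  | .inr m, .inl v => .inl (kproj m v)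
  | .inr m, .inr m' => .inr (min m m')

def klift (v : V3) : ℕ :=
  Nat.find (p := fun j => kmem v j) ⟨v.1 + v.2.1 + v.2.2, by unfold kmem; omega⟩

lemma klift_spec (v : V3) : kmem v (klift v) := Nat.find_spec _

lemma klift_min {v : V3} {j : ℕ} (h : kmem v j) : klift v ≤ j := Nat.find_min' _ h

def ksup : KP → KP → KP
  | .inl v, .inl w => .inl (max v.1 w.1, max v.2.1 w.2.1, max v.2.2 w.2.2)
  | .inl v, .inr m => .inr (max m (klift v))
  | .inr m, .inl v => .inr (max m (klift v))
  | .inr m, .inr m' => .inr (max m m')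

instance instLattice : Lattice KP where
  le := kle
  le_refl := by rintro (v|m) <;> simp [kle]
  le_trans := by
    rintro (v|m) (w|m') (x|m'') h1 h2 <;>
      simp only [kle, kmem] at h1 h2 ⊢ <;> omega
  le_antisymm := by
    rintro (⟨a,b,c⟩|m) (⟨a',b',c'⟩|m') h1 h2
    · simp only [kle] at h1 h2
      obtain ⟨rfl, rfl, rfl⟩ : a = a' ∧ b = b' ∧ c = c' := by omega
      rfl
    · exact h2.elim
    · exact h1.elim
    · simp only [kle] at h1 h2
      obtain rfl : m = m' := by omega
      rfl
  inf := kinf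
  inf_le_left := by
    rintro (v|m) (w|m') <;> simp only [kinf, kproj, kle, kmem] <;> omega
  inf_le_right := by
    rintro (v|m) (w|m') <;> simp only [kinf, kproj, kle, kmem] <;> omega
  le_inf := by
    rintro (u|k) (v|m) (w|m') h1 h2 <;>
      simp only [kinf, kproj, kle, kmem] at h1 h2 ⊢ <;> omega
  sup := ksup
  le_sup_left := by
    rintro (v|m) (w|m') <;> simp only [ksup, kle, kmem] <;>
      first
        | omega
        | · have h1 := klift_spec v
            have h2 : klift v ≤ max m' (klift v) := le_max_right _ _
            simp only [kmem] at h1 ⊢; omega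
  le_sup_right := by
    rintro (v|m) (w|m') <;> simp only [ksup, kle, kmem] <;>
      first
        | omega
        | · have h1 := klift_spec w
            have h2 : klift w ≤ max m (klift w) := le_max_right _ _
            simp only [kmem] at h1 ⊢; omega
  sup_le := by
    rintro (u|k) (v|m) (w|m') h1 h2 <;>
      simp only [ksup, kle, kmem] at h1 h2 ⊢ <;>
      first
        | omega
        | (exact h1.elim)
        | (exact h2.elim)
        | · have := klift_min h1; omega
        | · have := klift_min h2; omega

instance instBot : OrderBot KP where
  bot := .inl (0,0,0)
  bot_le := by
    rintro (v|m)
    · exact ⟨Nat.zero_le _, Nat.zero_le _, Nat.zero_le _⟩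
    · exact ⟨Nat.zero_le _, Nat.zero_le _, Nat.zero_le _⟩

instance : Countable KP := inferInstanceAs (Countable (V3 ⊕ ℕ))

end KP

namespace KP

/-- `inl` as an element of `KP` (so that the `KP` order instances are used). -/
def ofV (v : V3) : KP := Sum.inl v

/-- `inr` as an element of `KP`. -/
def top (m : ℕ) : KP := Sum.inr m

lemma inf_eq (x y : KP) : x ⊓ y = kinf x y := rfl

lemma ofV_le_ofV_iff {p q : V3} :
    ofV p ≤ ofV q ↔ (p.1 ≤ q.1 ∧ p.2.1 ≤ q.2.1 ∧ p.2.2 ≤ q.2.2) := Iff.rfl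

lemma ofV_le_top_iff {p : V3} {m : ℕ} :
    ofV p ≤ top m ↔ (p.1 ≤ 4*m+4 ∧ p.2.1 ≤ 4*m+4 ∧ p.2.2 ≤ 2*m+2) := Iff.rfl

lemma top_le_top_iff {m m' : ℕ} : top m ≤ top m' ↔ m ≤ m' := Iff.rfl

lemma ofV_le_ofV_iff' {α β γ a b c : ℕ} :
    ofV (α, β, γ) ≤ ofV (a, b, c) ↔ (α ≤ a ∧ β ≤ b ∧ γ ≤ c) := Iff.rfl

lemma ofV_le_top_iff' {α β γ m : ℕ} :
    ofV (α, β, γ) ≤ top m ↔ (α ≤ 4*m+4 ∧ β ≤ 4*m+4 ∧ γ ≤ 2*m+2) := Iff.rfl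

lemma not_top_le_ofV {m : ℕ} {v : V3} : ¬ top m ≤ ofV v := fun h => h

lemma ofV_inj {v w : V3} (h : ofV v = ofV w) : v = w :=
  Sum.inl_injective (show (Sum.inl v : V3 ⊕ ℕ) = Sum.inl w from h)

lemma top_inj {m m' : ℕ} (h : top m = top m') : m = m' :=
  Sum.inr_injective (show (Sum.inr m : V3 ⊕ ℕ) = Sum.inr m' from h)

lemma ofV_ne_top {v : V3} {m : ℕ} : ofV v ≠ top m := fun h =>
  nomatch (show (Sum.inl v : V3 ⊕ ℕ) = Sum.inr m from h)

lemma ofV_ne_of_ne {v w : V3} (h : v ≠ w) : ofV v ≠ ofV w :=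
  fun he => h (ofV_inj he)

lemma v3_ne {α β γ a b c : ℕ} (h : ¬(α = a ∧ β = b ∧ γ = c)) :
    ((α, β, γ) : V3) ≠ (a, b, c) := fun he => by
  injection he with h1 h2
  injection h2 with h2 h3
  exact h ⟨h1, h2, h3⟩

lemma v3_eq {α β γ a b c : ℕ} (h : ((α, β, γ) : V3) = (a, b, c)) :
    α = a ∧ β = b ∧ γ = c := by
  injection h with h1 h2
  injection h2 with h2 h3
  exact ⟨h1, h2, h3⟩

lemma inf_ofV_ofV' {α β γ a b c : ℕ} :
    ofV (α, β, γ) ⊓ ofV (a, b, c) = ofV (min α a, min β b, min γ c) := rfl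

lemma inf_ofV_top' {α β γ m : ℕ} :
    ofV (α, β, γ) ⊓ top m = ofV (min α (4*m+4), min β (4*m+4), min γ (2*m+2)) := rfl

/-- The cofinal 2-ladder: the image of `ℕ²` under `(a,b) ↦ (a, b, min a b)`. -/
def FS : Set KP := {p | ∃ a b : ℕ, p = ofV (a, b, min a b)}

lemma inf_ofV_ofV (v w : V3) :
    ofV v ⊓ ofV w = ofV (min v.1 w.1, min v.2.1 w.2.1, min v.2.2 w.2.2) := rfl

lemma inf_ofV_top (v : V3) (m : ℕ) :
    ofV v ⊓ top m = ofV (min v.1 (4*m+4), min v.2.1 (4*m+4), min v.2.2 (2*m+2)) := rfl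

lemma ncard_le_three {α : Type*} {S : Set α} (p q r : α) (h : S ⊆ {p, q, r}) :
    S.ncard ≤ 3 := by
  have hf : ({p, q, r} : Set α).Finite :=
    ((Set.finite_singleton r).insert q).insert p
  refine (Set.ncard_le_ncard h hf).trans ?_
  calc ({p, q, r} : Set α).ncard ≤ ({q, r} : Set α).ncard + 1 := Set.ncard_insert_le _ _
    _ ≤ (({r} : Set α).ncard + 1) + 1 :=
        Nat.add_le_add_right (Set.ncard_insert_le _ _) 1
    _ ≤ 3 := by rw [Set.ncard_singleton]

lemma ncard_le_two {α : Type*} {S : Set α} (p q : α) (h : S ⊆ {p, q}) :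
    S.ncard ≤ 2 := by
  have hf : ({p, q} : Set α).Finite := (Set.finite_singleton q).insert p
  refine (Set.ncard_le_ncard h hf).trans ?_
  calc ({p, q} : Set α).ncard ≤ ({q} : Set α).ncard + 1 := Set.ncard_insert_le _ _
    _ ≤ 2 := by rw [Set.ncard_singleton]

lemma iic_finite (q : KP) : (Set.Iic q).Finite := by
  cases q with
  | inl v =>
    refine Set.Finite.subset ((Set.finite_Iic v).image ofV) ?_
    rintro (w|m) hx
    · have h := ofV_le_ofV_iff.1 (Set.mem_Iic.1 hx : ofV w ≤ ofV v)
      exact ⟨w, Prod.le_def.mpr ⟨h.1, Prod.le_def.mpr ⟨h.2.1, h.2.2⟩⟩, rfl⟩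
    · exact absurd (Set.mem_Iic.1 hx : top m ≤ ofV v) not_top_le_ofV
  | inr m =>
    refine Set.Finite.subset
      (Set.Finite.union
        ((Set.finite_Iic ((4*m+4, 4*m+4, 2*m+2) : V3)).image ofV)
        ((Set.finite_Iic m).image top)) ?_
    rintro (w|m') hx
    · left
      have h := ofV_le_top_iff.1 (Set.mem_Iic.1 hx : ofV w ≤ top m)
      exact ⟨w, Prod.le_def.mpr ⟨h.1, Prod.le_def.mpr ⟨h.2.1, h.2.2⟩⟩, rfl⟩
    · right
      exact ⟨m', top_le_top_iff.1 (Set.mem_Iic.1 hx : top m' ≤ top m), rfl⟩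

lemma key_of_covby {P : Type*} [PartialOrder P] {x y : P} (h : x ⋖ y) {t : P}
    (h1 : x ≤ t) (h2 : t < y) : x = t := by
  by_contra hne
  exact h.2 (lt_of_le_of_ne h1 hne) h2

lemma covby_ofV {x : KP} {a b c : ℕ} (h : x ⋖ ofV (a, b, c)) :
    x ∈ ({ofV (a-1, b, c), ofV (a, b-1, c), ofV (a, b, c-1)} : Set KP) := by
  have hlt := h.1
  cases x with
  | inr m => exact absurd (hlt.le : top m ≤ ofV (a,b,c)) not_top_le_ofV
  | inl w =>
    obtain ⟨α, β, γ⟩ := w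
    obtain ⟨hle1, hle2, hle3⟩ := ofV_le_ofV_iff'.1 (hlt.le : ofV (α,β,γ) ≤ ofV (a,b,c))
    have hne : ¬(α = a ∧ β = b ∧ γ = c) := by
      rintro ⟨rfl, rfl, rfl⟩
      exact absurd rfl hlt.ne
    change ofV (α, β, γ) ∈ ({ofV (a-1, b, c), ofV (a, b-1, c), ofV (a, b, c-1)} : Set KP)
    simp only [Set.mem_insert_iff, Set.mem_singleton_iff]
    rcases show α < a ∨ β < b ∨ γ < c by omega with h' | h' | h'
    · exact Or.inl (key_of_covby h
        (ofV_le_ofV_iff'.2 ⟨by omega, by omega, by omega⟩)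
        (lt_of_le_of_ne (ofV_le_ofV_iff'.2 ⟨by omega, by omega, by omega⟩)
          (ofV_ne_of_ne (v3_ne (by omega)))))
    · exact Or.inr (Or.inl (key_of_covby h
        (ofV_le_ofV_iff'.2 ⟨by omega, by omega, by omega⟩)
        (lt_of_le_of_ne (ofV_le_ofV_iff'.2 ⟨by omega, by omega, by omega⟩)
          (ofV_ne_of_ne (v3_ne (by omega))))))
    · exact Or.inr (Or.inr (key_of_covby h
        (ofV_le_ofV_iff'.2 ⟨by omega, by omega, by omega⟩)
        (lt_of_le_of_ne (ofV_le_ofV_iff'.2 ⟨by omega, by omega, by omega⟩)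
          (ofV_ne_of_ne (v3_ne (by omega))))))

lemma covby_top {x : KP} {m : ℕ} (h : x ⋖ top m) :
    x ∈ ({top (m-1), ofV (4*m+4, 4*m+4, 2*m+2)} : Set KP) := by
  have hlt := h.1
  simp only [Set.mem_insert_iff, Set.mem_singleton_iff]
  cases x with
  | inr m' =>
    have hle : m' ≤ m := top_le_top_iff.1 (hlt.le : top m' ≤ top m)
    have hne : m' ≠ m := fun he => hlt.ne (congrArg top he)
    exact Or.inl (key_of_covby h
      (top_le_top_iff.2 (by omega))
      (lt_of_le_of_ne (top_le_top_iff.2 (by omega))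
        (fun he => by have := top_inj he; omega)))
  | inl w =>
    obtain ⟨α, β, γ⟩ := w
    obtain ⟨h1, h2, h3⟩ := ofV_le_top_iff'.1 (hlt.le : ofV (α, β, γ) ≤ top m)
    exact Or.inr (key_of_covby h
      (ofV_le_ofV_iff'.2 ⟨by omega, by omega, by omega⟩)
      (lt_of_le_of_ne (ofV_le_top_iff'.2 ⟨by omega, by omega, by omega⟩)
        ofV_ne_top))

end KP

open KP in
/-- There exists a countable 3-ladder K′ with an ideal K and a cofinal meet-subsemilattice
F of K which is a 2-ladder, such that no cofinal meet-subsemilattice of K′ of breadth at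
most two contains F. -/
theorem stmt_18 :
    ∃ (K' : Type) (_ : Lattice K') (_ : OrderBot K'),
      Countable K' ∧
      (∀ q : K', (Set.Iic q).Finite) ∧
      (∀ y : K', Set.ncard {x : K' | x ⋖ y} ≤ 3) ∧
      ∃ K : Set K', K.Nonempty ∧ DirectedOn (· ≤ ·) K ∧ IsLowerSet K ∧
        ∃ F : Set K', F ⊆ K ∧
          (∀ x ∈ K, ∃ y ∈ F, x ≤ y) ∧
          (∀ x ∈ F, ∀ y ∈ F, x ⊓ y ∈ F) ∧
          DirectedOn (· ≤ ·) F ∧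
          (∀ x : ↥F, Set.ncard {y : ↥F | y ⋖ x} ≤ 2) ∧
          ¬ ∃ F' : Set K', F ⊆ F' ∧
              (∀ x ∈ F', ∀ y ∈ F', x ⊓ y ∈ F') ∧
              (∀ x : K', ∃ y ∈ F', x ≤ y) ∧
              (∀ x ∈ F', ∀ y ∈ F', ∀ z ∈ F',
                x ⊓ y ⊓ z = x ⊓ y ∨ x ⊓ y ⊓ z = x ⊓ z ∨ x ⊓ y ⊓ z = y ⊓ z) := by
  refine ⟨KP, KP.instLattice, KP.instBot, inferInstance, iic_finite, ?_,
    Set.range ofV, ⟨ofV (0,0,0), ⟨(0,0,0), rfl⟩⟩, ?_, ?_,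
    FS, ?_, ?_, ?_, ?_, ?_, ?_⟩
  · -- 3-ladder
    intro y
    cases y with
    | inl v =>
      obtain ⟨a, b, c⟩ := v
      exact ncard_le_three _ _ _ (fun x hx => covby_ofV hx)
    | inr m =>
      exact (ncard_le_two _ _ (fun x hx => covby_top hx)).trans (by omega)
  · -- K directed
    rintro x ⟨⟨a, b, c⟩, rfl⟩ y ⟨⟨a', b', c'⟩, rfl⟩
    exact ⟨ofV (max a a', max b b', max c c'), ⟨_, rfl⟩,
      ofV_le_ofV_iff'.2 ⟨by omega, by omega, by omega⟩,
      ofV_le_ofV_iff'.2 ⟨by omega, by omega, by omega⟩⟩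
  · -- K lower set
    intro x y hxy hy
    obtain ⟨v, rfl⟩ := hy
    cases y with
    | inl w => exact ⟨w, rfl⟩
    | inr m => exact absurd hxy not_top_le_ofV
  · -- F ⊆ K
    rintro p ⟨a, b, rfl⟩
    exact ⟨(a, b, min a b), rfl⟩
  · -- F cofinal in K
    rintro x ⟨⟨a, b, c⟩, rfl⟩
    refine ⟨ofV (max a (max b c), max a (max b c), min (max a (max b c)) (max a (max b c))),
      ⟨_, _, rfl⟩, ofV_le_ofV_iff'.2 ⟨by omega, by omega, by omega⟩⟩
  · -- F meet closed
    rintro x ⟨a, b, rfl⟩ y ⟨a', b', rfl⟩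
    refine ⟨min a a', min b b', ?_⟩
    rw [inf_ofV_ofV']
    rw [show min (min a b) (min a' b') = min (min a a') (min b b') from by omega]
  · -- F directed
    rintro x ⟨a, b, rfl⟩ y ⟨a', b', rfl⟩
    exact ⟨ofV (max a a', max b b', min (max a a') (max b b')), ⟨_, _, rfl⟩,
      ofV_le_ofV_iff'.2 ⟨by omega, by omega, by omega⟩,
      ofV_le_ofV_iff'.2 ⟨by omega, by omega, by omega⟩⟩
  · -- F is a 2-ladder
    intro x
    obtain ⟨a, b, hx⟩ := x.2
    refine ncard_le_two
      (⟨ofV (a-1, b, min (a-1) b), ⟨a-1, b, rfl⟩⟩ : ↥FS)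
      (⟨ofV (a, b-1, min a (b-1)), ⟨a, b-1, rfl⟩⟩ : ↥FS) ?_
    intro y hy
    obtain ⟨α, β, hy'⟩ := y.2
    have hvlt : y.val < x.val := Subtype.coe_lt_coe.2 hy.1
    rw [hx, hy'] at hvlt
    obtain ⟨hle1, hle2, hle3⟩ := ofV_le_ofV_iff'.1 hvlt.le
    have hne : ¬(α = a ∧ β = b) := by
      rintro ⟨rfl, rfl⟩
      exact absurd rfl hvlt.ne
    simp only [Set.mem_insert_iff, Set.mem_singleton_iff]
    rcases show α < a ∨ β < b by omega with h' | h'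
    · refine Or.inl (key_of_covby hy ?_ ?_)
      · refine Subtype.coe_le_coe.1 ?_
        rw [hy']
        exact ofV_le_ofV_iff'.2 ⟨by omega, by omega, by omega⟩
      · refine Subtype.coe_lt_coe.1 ?_
        rw [hx]
        exact lt_of_le_of_ne (ofV_le_ofV_iff'.2 ⟨by omega, by omega, by omega⟩)
          (ofV_ne_of_ne (v3_ne (by omega)))
    · refine Or.inr (key_of_covby hy ?_ ?_)
      · refine Subtype.coe_le_coe.1 ?_
        rw [hy']
        exact ofV_le_ofV_iff'.2 ⟨by omega, by omega, by omega⟩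
      · refine Subtype.coe_lt_coe.1 ?_
        rw [hx]
        exact lt_of_le_of_ne (ofV_le_ofV_iff'.2 ⟨by omega, by omega, by omega⟩)
          (ofV_ne_of_ne (v3_ne (by omega)))
  · -- no breadth ≤ 2 cofinal extension
    rintro ⟨F', hFF', hmeet, hcof, hbr⟩
    obtain ⟨u, huF', hu⟩ := hcof (top 0)
    cases u with
    | inl w => exact absurd hu not_top_le_ofV
    | inr n =>
      have hx : ofV (3*n+3, 4*n+4, 3*n+3) ∈ FS :=
        ⟨3*n+3, 4*n+4, by rw [show min (3*n+3) (4*n+4) = 3*n+3 from by omega]⟩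
      have hy : ofV (4*n+4, 3*n+3, 3*n+3) ∈ FS :=
        ⟨4*n+4, 3*n+3, by rw [show min (4*n+4) (3*n+3) = 3*n+3 from by omega]⟩
      have e1 : ofV (3*n+3, 4*n+4, 3*n+3) ⊓ ofV (4*n+4, 3*n+3, 3*n+3)
          = ofV (3*n+3, 3*n+3, 3*n+3) := by
        rw [inf_ofV_ofV',
          show min (3*n+3) (4*n+4) = 3*n+3 from by omega,
          show min (4*n+4) (3*n+3) = 3*n+3 from by omega, min_self]
      have e2 : ofV (3*n+3, 4*n+4, 3*n+3) ⊓ top n = ofV (3*n+3, 4*n+4, 2*n+2) := by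
        rw [inf_ofV_top',
          show min (3*n+3) (4*n+4) = 3*n+3 from by omega,
          show min (4*n+4) (4*n+4) = 4*n+4 from by omega,
          show min (3*n+3) (2*n+2) = 2*n+2 from by omega]
      have e3 : ofV (4*n+4, 3*n+3, 3*n+3) ⊓ top n = ofV (4*n+4, 3*n+3, 2*n+2) := by
        rw [inf_ofV_top',
          show min (4*n+4) (4*n+4) = 4*n+4 from by omega,
          show min (3*n+3) (4*n+4) = 3*n+3 from by omega,
          show min (3*n+3) (2*n+2) = 2*n+2 from by omega]
      have e4 : ofV (3*n+3, 3*n+3, 3*n+3) ⊓ top n = ofV (3*n+3, 3*n+3, 2*n+2) := by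
        rw [inf_ofV_top',
          show min (3*n+3) (4*n+4) = 3*n+3 from by omega,
          show min (3*n+3) (2*n+2) = 2*n+2 from by omega]
      have h := hbr _ (hFF' hx) _ (hFF' hy) (top n) huF'
      rw [e1, e2, e3, e4] at h
      rcases h with h | h | h <;>
        · obtain ⟨h1, h2, h3⟩ := v3_eq (ofV_inj h)
          omega
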